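/- Let g(Δρ,Δs) = (s+Δs)/‖ρ−r+Δρ‖^α − (s+Δs)/‖ρ−r‖^α + α·s·(ρ−r)ᵀΔρ/‖ρ−r‖^{α+2}, where ρ,r ∈ ℝ^d with ρ ≠ r, s > 0, α > 0. Then (Δs,Δρ)=(0,0) is the unique critical point of g on the open set {(Δs,Δρ) : s+Δs>0, ρ−r+Δρ ≠ 0}, i.e. the unique point where both partial derivatives ∂g/∂Δs and the gradient ∇_{Δρ} g vanish. -/

import Mathlib

open scoped RealInnerProductSpace

lemma norm_rpow_hasFDerivAt {E : Type*} [NormedAddCommGroup E] [InnerProductSpace ℝ E]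
    (α : ℝ) {x : E} (hx : x ≠ 0) :
    HasFDerivAt (fun y : E => ‖y‖ ^ α) ((α * ‖x‖ ^ (α - 2)) • (innerSL ℝ x)) x := by
  have h2 : HasFDerivAt (fun y : E => ‖y‖ ^ 2) ((2:ℕ) • innerSL ℝ x) x :=
    (hasStrictFDerivAt_norm_sq x).hasFDerivAt
  have hne : (‖x‖ ^ 2 : ℝ) ≠ 0 := pow_ne_zero _ (norm_ne_zero_iff.mpr hx)
  have hr : HasDerivAt (fun t : ℝ => t ^ (α/2)) ((α/2) * (‖x‖^2 : ℝ) ^ (α/2 - 1)) (‖x‖^2) :=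
    Real.hasDerivAt_rpow_const (Or.inl hne)
  have hcomp := hr.comp_hasFDerivAt x h2
  have hfun : ((fun t : ℝ => t ^ (α/2)) ∘ fun y : E => ‖y‖ ^ 2) = fun y : E => ‖y‖ ^ α := by
    funext y
    simp only [Function.comp]
    rw [← Real.rpow_natCast ‖y‖ 2, ← Real.rpow_mul (norm_nonneg y)]
    congr 1
    ring
  rw [hfun] at hcomp
  convert hcomp using 1
  · rfl
  · rfl
  have hxpow : ((‖x‖ ^ 2 : ℝ)) ^ (α/2 - 1) = ‖x‖ ^ (α - 2) := by
    rw [← Real.rpow_natCast ‖x‖ 2, ← Real.rpow_mul (norm_nonneg x)]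
    congr 1
    ring
  rw [hxpow, ← Nat.cast_smul_eq_nsmul ℝ, smul_smul]
  congr 1
  push_cast
  ring

theorem stmt_3 {d : ℕ} (ρ r : EuclideanSpace ℝ (Fin d)) (hρr : ρ ≠ r)
    (s α : ℝ) (hs : 0 < s) (hα : 0 < α) :
    ∀ (Δs : ℝ) (Δρ : EuclideanSpace ℝ (Fin d)),
      0 < s + Δs → ρ - r + Δρ ≠ 0 →
      (fderiv ℝ (fun p : ℝ × EuclideanSpace ℝ (Fin d) =>
          (s + p.1) / ‖ρ - r + p.2‖ ^ α - (s + p.1) / ‖ρ - r‖ ^ α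
            + α * s * (inner ℝ (ρ - r) p.2 : ℝ) / ‖ρ - r‖ ^ (α + 2)) (Δs, Δρ) = 0
        ↔ (Δs, Δρ) = (0, (0 : EuclideanSpace ℝ (Fin d)))) := by
  intro Δs Δρ hc hw
  have hv0 : ρ - r ≠ (0 : EuclideanSpace ℝ (Fin d)) := sub_ne_zero.mpr hρr
  have hnv : (0:ℝ) < ‖ρ - r‖ := norm_pos_iff.mpr hv0
  have hnw : (0:ℝ) < ‖ρ - r + Δρ‖ := norm_pos_iff.mpr hw
  have hA : (0:ℝ) < ‖ρ - r + Δρ‖ ^ α := Real.rpow_pos_of_pos hnw α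
  have hB : (0:ℝ) < ‖ρ - r‖ ^ α := Real.rpow_pos_of_pos hnv α
  -- derivative pieces
  have hlin : HasFDerivAt (fun p : ℝ × EuclideanSpace ℝ (Fin d) => ρ - r + p.2)
      (ContinuousLinearMap.snd ℝ ℝ (EuclideanSpace ℝ (Fin d))) (Δs, Δρ) := (hasFDerivAt_snd).const_add (ρ - r)
  have hq : HasFDerivAt (fun p : ℝ × EuclideanSpace ℝ (Fin d) => ‖ρ - r + p.2‖ ^ α)
      (((α * ‖ρ - r + Δρ‖ ^ (α - 2)) • (innerSL ℝ (ρ - r + Δρ))).comp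
        (ContinuousLinearMap.snd ℝ ℝ (EuclideanSpace ℝ (Fin d)))) (Δs, Δρ) :=
    by have := (norm_rpow_hasFDerivAt α hw).comp (Δs, Δρ) hlin; exact this
  have hinv := (hasDerivAt_inv hA.ne').comp_hasFDerivAt (Δs, Δρ) hq
  have hse : HasFDerivAt (fun p : ℝ × EuclideanSpace ℝ (Fin d) => s + p.1)
      (ContinuousLinearMap.fst ℝ ℝ (EuclideanSpace ℝ (Fin d))) (Δs, Δρ) := (hasFDerivAt_fst).const_add s
  have h1 := hse.mul hinv
  have h2 := hse.mul_const ((‖ρ - r‖ ^ α)⁻¹)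
  have hinner : HasFDerivAt (fun p : ℝ × EuclideanSpace ℝ (Fin d) => (inner ℝ (ρ - r) p.2 : ℝ))
      ((innerSL ℝ (ρ - r)).comp (ContinuousLinearMap.snd ℝ ℝ (EuclideanSpace ℝ (Fin d)))) (Δs, Δρ) :=
    ((innerSL ℝ (ρ - r)).comp (ContinuousLinearMap.snd ℝ ℝ (EuclideanSpace ℝ (Fin d)))).hasFDerivAt
  have h3 := (hinner.const_mul (α * s)).mul_const ((‖ρ - r‖ ^ (α + 2))⁻¹)
  have hfd := (h1.sub h2).add h3
  have hfd' : HasFDerivAt (fun p : ℝ × EuclideanSpace ℝ (Fin d) =>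
      (s + p.1) / ‖ρ - r + p.2‖ ^ α - (s + p.1) / ‖ρ - r‖ ^ α
        + α * s * (inner ℝ (ρ - r) p.2 : ℝ) / ‖ρ - r‖ ^ (α + 2)) _ (Δs, Δρ) :=
    hfd.congr_of_eventuallyEq (Filter.Eventually.of_forall fun p => by
      simp [div_eq_mul_inv, Function.comp])
  rw [hfd'.fderiv]
  have key : ‖ρ - r‖ ^ (α - 2) * ‖ρ - r‖ ^ (α + 2) = (‖ρ - r‖ ^ α) ^ 2 := by
    rw [sq, ← Real.rpow_add hnv, ← Real.rpow_add hnv]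
    ring_nf
  have hkey : ((‖ρ - r‖ ^ α) ^ 2)⁻¹ * ‖ρ - r‖ ^ (α - 2) = (‖ρ - r‖ ^ (α + 2))⁻¹ := by
    rw [← key, mul_inv]
    have hm : ‖ρ - r‖ ^ (α - 2) ≠ 0 := (Real.rpow_pos_of_pos hnv _).ne'
    field_simp
  have hC : (0:ℝ) < ‖ρ - r‖ ^ (α + 2) := Real.rpow_pos_of_pos hnv _
  constructor
  · intro h0
    have e1 := ContinuousLinearMap.ext_iff.mp h0 (1, (0 : EuclideanSpace ℝ (Fin d)))
    simp only [ContinuousLinearMap.add_apply, ContinuousLinearMap.sub_apply, ContinuousLinearMap.smul_apply, ContinuousLinearMap.coe_comp', Function.comp_apply, ContinuousLinearMap.coe_fst', ContinuousLinearMap.coe_snd', ContinuousLinearMap.zero_apply, innerSL_apply_apply, smul_eq_mul, inner_zero_right, mul_zero, mul_one, add_zero, neg_zero, zero_add, neg_smul, ContinuousLinearMap.neg_apply] at e1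
    have hAB : ‖ρ - r + Δρ‖ ^ α = ‖ρ - r‖ ^ α := inv_inj.mp (sub_eq_zero.mp e1)
    have hnorm : ‖ρ - r + Δρ‖ = ‖ρ - r‖ := by
      have h := congrArg (fun t : ℝ => t ^ α⁻¹) hAB
      simpa [Real.rpow_rpow_inv (norm_nonneg _) hα.ne'] using h
    have e2 := ContinuousLinearMap.ext_iff.mp h0
      (0, (s + Δs) • (ρ - r + Δρ) - s • (ρ - r))
    simp only [ContinuousLinearMap.add_apply, ContinuousLinearMap.sub_apply, ContinuousLinearMap.smul_apply, ContinuousLinearMap.coe_comp', Function.comp_apply, ContinuousLinearMap.coe_fst', ContinuousLinearMap.coe_snd', ContinuousLinearMap.zero_apply, innerSL_apply_apply, smul_eq_mul, mul_zero, zero_add, neg_smul, ContinuousLinearMap.neg_apply, add_zero] at e2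
    rw [hnorm] at e2
    set W : ℝ := inner ℝ (ρ - r + Δρ) ((s + Δs) • (ρ - r + Δρ) - s • (ρ - r)) with hW
    set V : ℝ := inner ℝ (ρ - r) ((s + Δs) • (ρ - r + Δρ) - s • (ρ - r)) with hV
    have e3 : (‖ρ - r‖ ^ (α + 2))⁻¹ * α * (s * V - (s + Δs) * W) = 0 := by
      linear_combination e2 + α * (s + Δs) * W * hkey
    have h4 : s * V - (s + Δs) * W = 0 := by
      rcases mul_eq_zero.mp e3 with h | h
      · exact absurd h (by positivity)
      · exact h
    have hyy : (inner ℝ ((s + Δs) • (ρ - r + Δρ) - s • (ρ - r))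
        ((s + Δs) • (ρ - r + Δρ) - s • (ρ - r)) : ℝ) = 0 := by
      rw [inner_sub_left, real_inner_smul_left, real_inner_smul_left, ← hW, ← hV]
      linarith
    have hsw : (s + Δs) • (ρ - r + Δρ) = s • (ρ - r) :=
      sub_eq_zero.mp (inner_self_eq_zero.mp hyy)
    have hnorm2 := congrArg norm hsw
    rw [norm_smul, norm_smul, hnorm, Real.norm_eq_abs, Real.norm_eq_abs,
      abs_of_pos hc, abs_of_pos hs] at hnorm2
    have hΔs : Δs = 0 := by
      have := mul_right_cancel₀ hnv.ne' hnorm2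
      linarith
    subst hΔs
    rw [add_zero] at hsw
    have hΔρ : Δρ = 0 := by
      have hww := smul_right_injective (EuclideanSpace ℝ (Fin d)) hs.ne' hsw
      simpa [add_eq_left] using hww
    simp [hΔρ]
  · rintro h
    obtain ⟨h1', h2'⟩ := Prod.mk.injEq .. |>.mp h
    subst h1' h2'
    apply ContinuousLinearMap.ext
    rintro ⟨t, y⟩
    simp only [ContinuousLinearMap.add_apply, ContinuousLinearMap.sub_apply,
      ContinuousLinearMap.smul_apply, ContinuousLinearMap.coe_comp', Function.comp_apply,
      ContinuousLinearMap.coe_fst', ContinuousLinearMap.coe_snd',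
      ContinuousLinearMap.zero_apply, innerSL_apply_apply, smul_eq_mul, add_zero,
      ContinuousLinearMap.neg_apply, neg_smul]
    linear_combination (-(α * s * (inner ℝ (ρ - r) y : ℝ))) * hkey
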